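/- Let A, B be bounded positive operators on a complex Hilbert space H. Then A and B are mutually singular if and only if the parallel sum A : B is zero. -/

import Mathlib

open Filter

local notation "⟪" x ", " y "⟫" => @inner ℂ _ _ x y

variable {H : Type*} [NormedAddCommGroup H] [InnerProductSpace ℂ H] [CompleteSpace H]

/-- The quadratic-form order: `A ≤ B` iff `⟨Ax, x⟩ ≤ ⟨Bx, x⟩` for all `x`. -/
def QuadLE (A B : H →L[ℂ] H) : Prop :=
  ∀ x : H, (⟪A x, x⟫).re ≤ (⟪B x, x⟫).re

/-- `B` is absolutely continuous with respect to `A` (`B ≪ A`): for every sequence `(xₙ)`,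
if `⟨Axₙ, xₙ⟩ → 0` and `⟨B(xₙ−xₘ), xₙ−xₘ⟩ → 0` as `n, m → ∞`, then `⟨Bxₙ, xₙ⟩ → 0`. -/
def AbsCont (B A : H →L[ℂ] H) : Prop :=
  ∀ x : ℕ → H,
    Tendsto (fun n => (⟪A (x n), x n⟫).re) atTop (nhds 0) →
    (∀ ε > (0 : ℝ), ∃ N : ℕ, ∀ n ≥ N, ∀ m ≥ N,
      (⟪B (x n - x m), x n - x m⟫).re < ε) →
    Tendsto (fun n => (⟪B (x n), x n⟫).re) atTop (nhds 0)

/-- `A` and `B` are mutually singular (`A ⊥ B`): the only bounded positive operator `C` with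
`C ≤ A` and `C ≤ B` is `C = 0`. -/
def MutSing (A B : H →L[ℂ] H) : Prop :=
  ∀ C : H →L[ℂ] H, C.IsPositive → QuadLE C A → QuadLE C B → C = 0

/-- A positive operator whose (real) quadratic form vanishes identically is zero. -/
lemma pos_quad_zero (C : H →L[ℂ] H) (hC : C.IsPositive)
    (h : ∀ x : H, (⟪C x, x⟫).re = 0) : C = 0 := by
  have hsym : (C : H →ₗ[ℂ] H).IsSymmetric := hC.1
  have hreal := (LinearMap.isSymmetric_iff_inner_map_self_real (C : H →ₗ[ℂ] H)).mp hsym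
  have hz : ∀ x : H, ⟪C x, x⟫ = 0 := by
    intro x
    have h2 := congrArg Complex.im (hreal x)
    simp only [Complex.conj_im, ContinuousLinearMap.coe_coe] at h2
    have him : (⟪C x, x⟫).im = 0 := by linarith
    exact Complex.ext (by simpa using h x) (by simpa using him)
  have : (C : H →ₗ[ℂ] H) = 0 := (inner_map_self_eq_zero _).mp hz
  ext x
  have := congrFun (congrArg (fun f : H →ₗ[ℂ] H => (f : H → H)) this) x
  simpa using this

/-- **Singularity and the parallel sum** (Theorem 6.1 (i) ⇔ (ii), Hilbert space case).
`A ⊥ B` iff the parallel sum `A : B` (characterized by its quadratic form) is zero. -/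
theorem stmt_13 (A B : H →L[ℂ] H) (hA : A.IsPositive) (hB : B.IsPositive)
    (P : H →L[ℂ] H) (hP : P.IsPositive)
    (hPform : ∀ x : H, (⟪P x, x⟫).re =
      ⨅ y : H, ((⟪A (x - y), x - y⟫).re + (⟪B y, y⟫).re)) :
    MutSing A B ↔ P = 0 := by
  have hAnn : ∀ z : H, 0 ≤ (⟪A z, z⟫).re := fun z => hA.2 z
  have hBnn : ∀ z : H, 0 ≤ (⟪B z, z⟫).re := fun z => hB.2 z
  have hbdd : ∀ x : H, BddBelow (Set.range fun y : H =>
      (⟪A (x - y), x - y⟫).re + (⟪B y, y⟫).re) := by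
    intro x
    refine ⟨0, ?_⟩
    rintro r ⟨y, rfl⟩
    exact add_nonneg (hAnn _) (hBnn _)
  constructor
  · intro hMS
    refine hMS P hP ?_ ?_
    · intro x
      rw [hPform x]
      have := ciInf_le (hbdd x) (0 : H)
      simpa using this
    · intro x
      rw [hPform x]
      have := ciInf_le (hbdd x) x
      simpa using this
  · intro hP0 C hC hCA hCB
    apply pos_quad_zero C hC
    intro x
    have hC0 : 0 ≤ (⟪C x, x⟫).re := hC.2 x
    -- parallelogram-type lower bound
    have key : ∀ y : H, (⟪C x, x⟫).re / 2 ≤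
        (⟪A (x - y), x - y⟫).re + (⟪B y, y⟫).re := by
      intro y
      have h1 : (⟪C (x - y), x - y⟫).re + (⟪C y, y⟫).re ≤
          (⟪A (x - y), x - y⟫).re + (⟪B y, y⟫).re :=
        add_le_add (hCA (x - y)) (hCB y)
      have gen : ∀ u v : H, (⟪C (u + v), u + v⟫).re + (⟪C (u - v), u - v⟫).re =
          2 * (⟪C u, u⟫).re + 2 * (⟪C v, v⟫).re := by
        intro u v
        simp only [map_add, map_sub, inner_add_left, inner_add_right,
          inner_sub_left, inner_sub_right, Complex.add_re, Complex.sub_re]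
        ring
      have h2 : (⟪C x, x⟫).re + (⟪C (x - 2 • y), x - 2 • y⟫).re =
          2 * (⟪C (x - y), x - y⟫).re + 2 * (⟪C y, y⟫).re := by
        have := gen (x - y) y
        have e1 : (x - y) + y = x := by abel
        have e2 : (x - y) - y = x - 2 • y := by rw [two_smul]; abel
        rwa [e1, e2] at this
      have h3 : 0 ≤ (⟪C (x - 2 • y), x - 2 • y⟫).re := hC.2 _
      nlinarith
    have hinf : (⟪C x, x⟫).re / 2 ≤ (⟪P x, x⟫).re := by
      rw [hPform x]
      exact le_ciInf key
    rw [hP0] at hinf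
    simp at hinf
    linarith
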